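/- (Theorem 3, cognitive limits of ideal AI systems.) Let C : ℕ → ℕ → ℕ → Bool be a computable checker that is sound, i.e., for all x n p, C x n p = true implies K x > n. Then there exist x n : ℕ such that K x > n and C x n p = false for every p : ℕ; that is, some true statement of the form 'every algorithm that outputs x has length > n' admits no proof accepted by the checker. -/

import Mathlib

noncomputable def K (x : ℕ) : ℕ :=
  sInf {m : ℕ | ∃ c : Nat.Partrec.Code, Nat.Partrec.Code.encodeCode c = m ∧ c.eval 0 = Part.some x}

open Nat.Partrec (Code)
open Nat.Partrec.Code

lemma K_le {c : Code} {x : ℕ} (h : c.eval 0 = Part.some x) : K x ≤ encodeCode c :=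
  Nat.sInf_le ⟨c, rfl, h⟩

lemma K_set_nonempty (x : ℕ) :
    {m : ℕ | ∃ c : Code, encodeCode c = m ∧ c.eval 0 = Part.some x}.Nonempty :=
  ⟨encodeCode (Code.const x), Code.const x, rfl, eval_const x 0⟩

lemma exists_K_gt (N : ℕ) : ∃ x : ℕ, N < K x := by
  by_contra h
  push_neg at h
  have hx : ∀ x : ℕ, ∃ c : Code, encodeCode c ≤ N ∧ c.eval 0 = Part.some x := by
    intro x
    obtain ⟨c, hc, he⟩ := Nat.sInf_mem (K_set_nonempty x)
    exact ⟨c, hc ▸ h x, he⟩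
  choose c hle he using hx
  have : ∃ x y : ℕ, x ≠ y ∧ (fun x => (⟨encodeCode (c x), Nat.lt_succ_of_le (hle x)⟩ : Fin (N+1))) x
      = (fun x => (⟨encodeCode (c x), Nat.lt_succ_of_le (hle x)⟩ : Fin (N+1))) y :=
    Finite.exists_ne_map_eq_of_infinite _
  obtain ⟨x, y, hxy, hfe⟩ := this
  have hcc : c x = c y := by
    have : encodeCode (c x) = encodeCode (c y) := congrArg Fin.val hfe
    have := encodeCode_eq ▸ this
    exact Encodable.encode_injective this
  apply hxy
  have := (he x).symm.trans (hcc ▸ he y)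
  exact Part.some_injective this

theorem cognitive_limits_ideal (C : ℕ → ℕ → ℕ → Bool)
    (hC : Computable (fun q : ℕ × ℕ × ℕ => C q.1 q.2.1 q.2.2))
    (hsound : ∀ x n p : ℕ, C x n p = true → K x > n) :
    ∃ x n : ℕ, K x > n ∧ ∀ p : ℕ, C x n p = false := by
  by_contra hcon
  push_neg at hcon
  -- hcon : ∀ x n, K x > n → ∃ p, C x n p = true
  simp only [ne_eq, Bool.not_eq_false] at hcon
  -- the search function
  set f : Code → ℕ →. ℕ := fun c _ =>
    (Nat.rfind fun q => Part.some (C q.unpair.1 (encodeCode c) q.unpair.2)).map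
      fun q => q.unpair.1 with hf
  have hfp : Partrec₂ f := by
    apply Partrec.map
    · apply Partrec.rfind
      apply Computable₂.partrec₂
      have : Computable fun (a : (Code × ℕ) × ℕ) =>
          (a.2.unpair.1, (Encodable.encode a.1.1, a.2.unpair.2)) :=
        Computable.pair
          (Computable.fst.comp (Computable.unpair.comp Computable.snd))
          (Computable.pair (Computable.encode.comp (Computable.fst.comp Computable.fst))
            (Computable.snd.comp (Computable.unpair.comp Computable.snd)))
      have := hC.comp this
      simp [encodeCode_eq] at this
      exact this
    · exact (Computable.fst.comp (Computable.unpair.comp Computable.snd)).to₂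
  obtain ⟨c, hc⟩ := fixed_point₂ hfp
  -- there is x with K x > encodeCode c, hence a proof p, hence rfind terminates
  obtain ⟨x, hx⟩ := exists_K_gt (encodeCode c)
  obtain ⟨p, hp⟩ := hcon x (encodeCode c) hx
  have hdom : ∃ q, true ∈ (fun q : ℕ => Part.some (C q.unpair.1 (encodeCode c) q.unpair.2)) q ∧
      ∀ m < q, ((fun q : ℕ => Part.some (C q.unpair.1 (encodeCode c) q.unpair.2)) m).Dom := by
    refine ⟨Nat.pair x p, ?_, fun m _ => trivial⟩
    simp [Nat.unpair_pair, hp]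
  have hrdom : (Nat.rfind fun q => Part.some (C q.unpair.1 (encodeCode c) q.unpair.2)).Dom :=
    Nat.rfind_dom.2 hdom
  set q₀ := (Nat.rfind fun q => Part.some (C q.unpair.1 (encodeCode c) q.unpair.2)).get hrdom
    with hq₀
  have hmem : q₀ ∈ Nat.rfind fun q => Part.some (C q.unpair.1 (encodeCode c) q.unpair.2) :=
    Part.get_mem hrdom
  have hq : C q₀.unpair.1 (encodeCode c) q₀.unpair.2 = true := by
    have := Nat.rfind_spec hmem
    simpa using this
  have heval : c.eval 0 = Part.some q₀.unpair.1 := by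
    rw [hc, hf]
    apply Part.eq_some_iff.2
    exact Part.mem_map _ hmem
  have h1 : K q₀.unpair.1 ≤ encodeCode c := K_le heval
  have h2 : K q₀.unpair.1 > encodeCode c := hsound _ _ _ hq
  omega
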